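/- arXiv:2108.08332 — 2 statements merged into one kernel-verified Lean document; each statement's English description precedes it below -/
import Mathlib

section
/- Under the same hypotheses (A₂ = A₃ = 0, A₁, S₂ = C₁A₁⁻¹B₁ᵀ, S₃ = C₂S₂⁻¹B₂ᵀ invertible), the preconditioned matrix 𝒯₂ = diag(A₁, S₂, -S₃)⁻¹ 𝒜 = [[I, A₁⁻¹B₁ᵀ, 0],[S₂⁻¹C₁, 0, S₂⁻¹B₂ᵀ],[0, -S₃⁻¹C₂, 0]] satisfies (𝒯₂ - I)(𝒯₂² - 𝒯₂ - I)(𝒯₂³ - 𝒯₂² - I) = 0. -/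
open Matrix


section aux
variable {R m₁ m₂ n₁ n₂ n m : Type*} [Zero R]

lemma fcfr₁ (B₁₂ : Matrix m₁ n₂ R) (B₂₂ : Matrix m₂ n₂ R) :
    fromCols (0 : Matrix (m₁ ⊕ m₂) n₁ R) (fromRows B₁₂ B₂₂) = fromBlocks 0 B₁₂ 0 B₂₂ := by
  ext (i|i) (j|j) <;> simp

lemma fcfr₂ (B₁₁ : Matrix m₁ n₁ R) (B₂₁ : Matrix m₂ n₁ R) :
    fromCols (fromRows B₁₁ B₂₁) (0 : Matrix (m₁ ⊕ m₂) n₂ R) = fromBlocks B₁₁ 0 B₂₁ 0 := by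
  ext (i|i) (j|j) <;> simp

lemma frfc₁ (B₂₁ : Matrix m₂ n₁ R) (B₂₂ : Matrix m₂ n₂ R) :
    fromRows (0 : Matrix m₁ (n₁ ⊕ n₂) R) (fromCols B₂₁ B₂₂) = fromBlocks 0 0 B₂₁ B₂₂ := by
  ext (i|i) (j|j) <;> simp

lemma frfc₂ (B₁₁ : Matrix m₁ n₁ R) (B₁₂ : Matrix m₁ n₂ R) :
    fromRows (fromCols B₁₁ B₁₂) (0 : Matrix m₂ (n₁ ⊕ n₂) R) = fromBlocks B₁₁ B₁₂ 0 0 := by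
  ext (i|i) (j|j) <;> simp

end aux

section aux2
variable {R m₁ m₂ n₁ n₂ n m o l : Type*} [Sub R]

lemma fromRows_sub (A₁ B₁ : Matrix m₁ n R) (A₂ B₂ : Matrix m₂ n R) :
    fromRows A₁ A₂ - fromRows B₁ B₂ = fromRows (A₁ - B₁) (A₂ - B₂) := by
  ext (i|i) j <;> simp

lemma fromCols_sub (A₁ B₁ : Matrix m n₁ R) (A₂ B₂ : Matrix m n₂ R) :
    fromCols A₁ A₂ - fromCols B₁ B₂ = fromCols (A₁ - B₁) (A₂ - B₂) := by
  ext i (j|j) <;> simp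

lemma fromBlocks_sub (A A' : Matrix n l R) (B B' : Matrix n m R)
    (C C' : Matrix o l R) (D D' : Matrix o m R) :
    fromBlocks A B C D - fromBlocks A' B' C' D' =
      fromBlocks (A - A') (B - B') (C - C') (D - D') := by
  ext (i|i) (j|j) <;> simp

lemma fromRows_add' {R m₁ m₂ n : Type*} [Add R] (A₁ B₁ : Matrix m₁ n R) (A₂ B₂ : Matrix m₂ n R) :
    fromRows A₁ A₂ + fromRows B₁ B₂ = fromRows (A₁ + B₁) (A₂ + B₂) := by
  ext (i|i) j <;> simp

lemma fromCols_add' {R m n₁ n₂ : Type*} [Add R] (A₁ B₁ : Matrix m n₁ R) (A₂ B₂ : Matrix m n₂ R) :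
    fromCols A₁ A₂ + fromCols B₁ B₂ = fromCols (A₁ + B₁) (A₂ + B₂) := by
  ext i (j|j) <;> simp

end aux2

lemma key {R : Type*} [CommRing R] {a b c : Type} [Fintype a] [Fintype b] [Fintype c]
    [DecidableEq a] [DecidableEq b] [DecidableEq c]
    (E : Matrix a b R) (F : Matrix b a R) (G : Matrix b c R) (H : Matrix c b R)
    (hFE : F * E = 1) (hHG : H * G = -1)
    (T : Matrix ((a ⊕ b) ⊕ c) ((a ⊕ b) ⊕ c) R)
    (hT : T = fromBlocks (fromBlocks 1 E F 0) (fromRows 0 G) (fromCols 0 H) 0) :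
    (T - 1) * (T ^ 2 - T - 1) * (T ^ 3 - T ^ 2 - 1) = 0 := by
  have hFE' : ∀ {m : Type} (X : Matrix b m R), F * (E * X) = X := by
    intro m X; rw [← Matrix.mul_assoc, hFE, Matrix.one_mul]
  have hHG' : ∀ {m : Type} (X : Matrix c m R), H * (G * X) = -X := by
    intro m X; rw [← Matrix.mul_assoc, hHG, Matrix.neg_mul, Matrix.one_mul]
  have hT2 : T ^ 2 = fromBlocks (fromBlocks (E * F + 1) E F (G * H + 1))
      (fromRows (E * G) 0) (fromCols (H * F) 0) (-1) := by
    rw [sq, hT]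
    simp [fromBlocks_multiply, fromRows_mul_fromCols, fromCols_mul_fromRows,
      fromBlocks_mul_fromRows, fromCols_mul_fromBlocks, fromRows_mul, mul_fromCols,
      fcfr₁, fcfr₂, frfc₁, frfc₂, fromBlocks_add, hFE, hHG, hFE', hHG', fromRows_add', fromCols_add', Matrix.mul_add, Matrix.add_mul, Matrix.mul_assoc, Matrix.neg_mul, Matrix.mul_neg, add_comm, add_left_comm, add_assoc]
  have hT3 : T ^ 3 = fromBlocks (fromBlocks (E * F + E * F + 1) (E * (G * H) + E + E) (F + F + G * (H * F)) 1)
      (fromRows (E * G) 0) (fromCols (H * F) 0) 0 := by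
    rw [pow_succ, hT2, hT]
    simp [fromBlocks_multiply, fromRows_mul_fromCols, fromCols_mul_fromRows,
      fromBlocks_mul_fromRows, fromCols_mul_fromBlocks, fromRows_mul, mul_fromCols,
      fcfr₁, fcfr₂, frfc₁, frfc₂, fromBlocks_add, hFE, hHG, hFE', hHG', fromRows_add', fromCols_add', Matrix.mul_add, Matrix.add_mul, Matrix.mul_assoc, Matrix.neg_mul, Matrix.mul_neg, add_comm, add_left_comm, add_assoc]
  have hone : (1 : Matrix ((a ⊕ b) ⊕ c) ((a ⊕ b) ⊕ c) R)
      = fromBlocks (fromBlocks 1 0 0 1) 0 0 1 := by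
    rw [fromBlocks_one, fromBlocks_one]
  have h1 : T - 1 = fromBlocks (fromBlocks 0 E F (-1)) (fromRows 0 G) (fromCols 0 H) (-1) := by
    rw [hT, hone]
    simp only [fromBlocks_sub, sub_zero, zero_sub, sub_self]
  have h2 : T ^ 2 - T - 1 = fromBlocks (fromBlocks (E * F - 1) 0 0 (G * H))
      (fromRows (E * G) (-G)) (fromCols (H * F) (-H)) (-2) := by
    rw [hT2, hT, hone]
    simp only [fromBlocks_sub, fromRows_sub, fromCols_sub, sub_zero, zero_sub]
    rw [fromBlocks_inj, fromBlocks_inj, fromRows_ext_iff, fromCols_ext_iff]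
    refine ⟨⟨?_, ?_, ?_, ?_⟩, ⟨?_, ?_⟩, ⟨?_, ?_⟩, ?_⟩ <;>
      first
        | abel1
        | (simp; done)
        | (norm_num; done)
        | (simp; abel1)
        | (norm_num; abel1)
        | (norm_num; simp)
  have h3 : T ^ 3 - T ^ 2 - 1 = fromBlocks
      (fromBlocks (E * F - 1) (E * (G * H) + E) (F + G * (H * F)) (-(G * H) - 1)) 0 0 0 := by
    rw [hT3, hT2, hone]
    simp only [fromBlocks_sub, fromRows_sub, fromCols_sub, sub_zero, zero_sub, sub_self,
      fromRows_zero, fromCols_zero, neg_zero]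
    rw [fromBlocks_inj, fromBlocks_inj]
    refine ⟨⟨?_, ?_, ?_, ?_⟩, ?_, ?_, ?_⟩ <;> first | abel1 | (simp; done) | (norm_num; done) | (simp; abel1) | (norm_num; abel1) | (norm_num; simp)
  have hM : (fromBlocks (fromBlocks 0 E F (-1)) (fromRows 0 G) (fromCols 0 H) (-1)) *
      (fromBlocks (fromBlocks (E * F - 1) 0 0 (G * H))
        (fromRows (E * G) (-G)) (fromCols (H * F) (-H)) (-2)) =
      fromBlocks (fromBlocks 0 (E * (G * H)) (G * (H * F)) (-(G * H) - G * H))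
        (fromRows (-(E * G)) 0) (fromCols (-(H * F)) 0) 3 := by
    simp only [fromBlocks_multiply, fromRows_mul_fromCols, fromCols_mul_fromRows,
      fromBlocks_mul_fromRows, fromCols_mul_fromBlocks, fromRows_mul, mul_fromCols,
      fcfr₁, fcfr₂, frfc₁, frfc₂, fromBlocks_add, fromRows_add', fromCols_add',
      Matrix.mul_add, Matrix.add_mul, Matrix.mul_sub, Matrix.sub_mul,
      Matrix.mul_assoc, Matrix.neg_mul, Matrix.mul_neg, hFE, hHG, hFE', hHG',
      Matrix.mul_one, Matrix.one_mul, Matrix.mul_zero, Matrix.zero_mul,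
      add_zero, zero_add, neg_neg, mul_neg, neg_mul, sub_zero, zero_sub, mul_one, one_mul, fromRows_neg, fromCols_neg, fromBlocks_neg, neg_zero, fromCols_fromRows_eq_fromBlocks, fromRows_fromCols_eq_fromBlocks, ← one_add_one_eq_two, ← two_add_one_eq_three]
    rw [fromBlocks_inj, fromBlocks_inj, fromRows_ext_iff, fromCols_ext_iff]
    refine ⟨⟨?_, ?_, ?_, ?_⟩, ⟨?_, ?_⟩, ⟨?_, ?_⟩, ?_⟩ <;>
      first
        | abel1
        | (simp; done)
        | (norm_num; done)
        | (simp; abel1)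
        | (norm_num; abel1)
        | (norm_num; simp)
  rw [h1, h2, Matrix.mul_assoc, ← Matrix.mul_assoc, hM, h3]
  simp only [fromBlocks_multiply, fromRows_mul_fromCols, fromCols_mul_fromRows,
    fromBlocks_mul_fromRows, fromCols_mul_fromBlocks, fromRows_mul, mul_fromCols,
    fcfr₁, fcfr₂, frfc₁, frfc₂, fromBlocks_add, fromRows_add', fromCols_add',
    Matrix.mul_add, Matrix.add_mul, Matrix.mul_sub, Matrix.sub_mul,
    Matrix.mul_assoc, Matrix.neg_mul, Matrix.mul_neg, hFE, hHG, hFE', hHG',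
    Matrix.mul_one, Matrix.one_mul, Matrix.mul_zero, Matrix.zero_mul,
    add_zero, zero_add, neg_neg, sub_zero, zero_sub, sub_self, neg_zero, fromRows_neg, fromCols_neg, fromBlocks_neg, neg_zero, fromCols_fromRows_eq_fromBlocks, fromRows_fromCols_eq_fromBlocks, ← one_add_one_eq_two, ← two_add_one_eq_three,
    fromRows_zero, fromCols_zero, fromBlocks_zero]
  rw [← fromBlocks_zero, fromBlocks_inj, ← fromBlocks_zero, fromBlocks_inj]
  refine ⟨⟨?_, ?_, ?_, ?_⟩, ?_, ?_, ?_⟩ <;> first | abel1 | (simp; done) | (norm_num; done) | (simp; abel1) | (norm_num; abel1) | (norm_num; simp)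


theorem stmt_5 {n₁ n₂ n₃ : ℕ}
    (A₁ : Matrix (Fin n₁) (Fin n₁) ℝ)
    (B₁ C₁ : Matrix (Fin n₂) (Fin n₁) ℝ) (B₂ C₂ : Matrix (Fin n₃) (Fin n₂) ℝ)
    (hA₁ : IsUnit A₁)
    (S₂ : Matrix (Fin n₂) (Fin n₂) ℝ) (hS₂def : S₂ = C₁ * A₁⁻¹ * B₁ᵀ)
    (hS₂ : IsUnit S₂)
    (S₃ : Matrix (Fin n₃) (Fin n₃) ℝ) (hS₃def : S₃ = C₂ * S₂⁻¹ * B₂ᵀ)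
    (hS₃ : IsUnit S₃)
    (𝒜 : Matrix ((Fin n₁ ⊕ Fin n₂) ⊕ Fin n₃) ((Fin n₁ ⊕ Fin n₂) ⊕ Fin n₃) ℝ)
    (h𝒜 : 𝒜 = fromBlocks (fromBlocks A₁ B₁ᵀ C₁ 0) (fromRows 0 B₂ᵀ)
      (fromCols 0 C₂) 0)
    (T : Matrix ((Fin n₁ ⊕ Fin n₂) ⊕ Fin n₃) ((Fin n₁ ⊕ Fin n₂) ⊕ Fin n₃) ℝ)
    (hT : T = (fromBlocks (fromBlocks A₁ 0 0 S₂) 0 0 (-S₃))⁻¹ * 𝒜) :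
    (T - 1) * (T ^ 2 - T - 1) * (T ^ 3 - T ^ 2 - 1) = 0 := by
  have hP : (fromBlocks A₁ (0 : Matrix (Fin n₁) (Fin n₂) ℝ) 0 S₂)⁻¹
      = fromBlocks A₁⁻¹ 0 0 S₂⁻¹ := by
    rw [inv_fromBlocks_zero₂₁_of_isUnit_iff _ _ _ (iff_of_true hA₁ hS₂)]
    simp
  have hPunit : IsUnit (fromBlocks A₁ (0 : Matrix (Fin n₁) (Fin n₂) ℝ) 0 S₂) :=
    isUnit_fromBlocks_zero₂₁.mpr ⟨hA₁, hS₂⟩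
  have hnegS₃ : (-S₃)⁻¹ = -S₃⁻¹ :=
    Matrix.inv_eq_left_inv (by
      rw [neg_mul_neg, Matrix.nonsing_inv_mul _ ((Matrix.isUnit_iff_isUnit_det _).mp hS₃)])
  have hD : (fromBlocks (fromBlocks A₁ (0 : Matrix (Fin n₁) (Fin n₂) ℝ) 0 S₂) 0 0 (-S₃))⁻¹
      = fromBlocks (fromBlocks A₁⁻¹ 0 0 S₂⁻¹) 0 0 (-S₃⁻¹) := by
    rw [inv_fromBlocks_zero₂₁_of_isUnit_iff _ _ _ (iff_of_true hPunit hS₃.neg), hP, hnegS₃]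
    simp
  have hC₁ : C₁ * (A₁⁻¹ * B₁ᵀ) = S₂ := by rw [hS₂def, Matrix.mul_assoc]
  have hC₂ : C₂ * (S₂⁻¹ * B₂ᵀ) = S₃ := by rw [hS₃def, Matrix.mul_assoc]
  have hFE : (S₂⁻¹ * C₁) * (A₁⁻¹ * B₁ᵀ) = 1 := by
    rw [Matrix.mul_assoc, hC₁, Matrix.nonsing_inv_mul _ ((Matrix.isUnit_iff_isUnit_det _).mp hS₂)]
  have hHG : (-(S₃⁻¹ * C₂)) * (S₂⁻¹ * B₂ᵀ) = -1 := by
    rw [Matrix.neg_mul, Matrix.mul_assoc, hC₂,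
      Matrix.nonsing_inv_mul _ ((Matrix.isUnit_iff_isUnit_det _).mp hS₃)]
  refine key (A₁⁻¹ * B₁ᵀ) (S₂⁻¹ * C₁) (S₂⁻¹ * B₂ᵀ) (-(S₃⁻¹ * C₂)) hFE hHG T ?_
  rw [hT, hD, h𝒜]
  simp only [fromBlocks_multiply, fromBlocks_mul_fromRows, mul_fromCols,
    Matrix.zero_mul, Matrix.mul_zero, add_zero, zero_add,
    Matrix.neg_mul, neg_zero, fromCols_neg,
    Matrix.nonsing_inv_mul _ ((Matrix.isUnit_iff_isUnit_det _).mp hA₁)]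
end

section
/- Under the same hypotheses (A₂ = A₃ = 0, A₁, S₂ = C₁A₁⁻¹B₁ᵀ, S₃ = C₂S₂⁻¹B₂ᵀ invertible), the preconditioned matrix 𝒯₃ = diag(A₁, -S₂, S₃)⁻¹ 𝒜 = [[I, A₁⁻¹B₁ᵀ, 0],[-S₂⁻¹C₁, 0, -S₂⁻¹B₂ᵀ],[0, S₃⁻¹C₂, 0]] satisfies (𝒯₃ - I)(𝒯₃² - 𝒯₃ + I)(𝒯₃³ - 𝒯₃² + 2𝒯₃ - I) = 0. -/
open Matrix

section helpers
variable {R m₁ m₂ n₁ n₂ : Type*}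

@[simp] lemma fc_zero_fr [Zero R] (B₁ : Matrix m₁ n₂ R) (B₂ : Matrix m₂ n₂ R) :
    fromCols (0 : Matrix (m₁ ⊕ m₂) n₁ R) (fromRows B₁ B₂) = fromBlocks 0 B₁ 0 B₂ := by
  ext (i|i) (j|j) <;> simp [fromBlocks]

@[simp] lemma fc_fr_zero [Zero R] (B₁ : Matrix m₁ n₁ R) (B₂ : Matrix m₂ n₁ R) :
    fromCols (fromRows B₁ B₂) (0 : Matrix (m₁ ⊕ m₂) n₂ R) = fromBlocks B₁ 0 B₂ 0 := by
  ext (i|i) (j|j) <;> simp [fromBlocks]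

@[simp] lemma fr_zero_fc [Zero R] (B₁ : Matrix m₂ n₁ R) (B₂ : Matrix m₂ n₂ R) :
    fromRows (0 : Matrix m₁ (n₁ ⊕ n₂) R) (fromCols B₁ B₂) = fromBlocks 0 0 B₁ B₂ := by
  ext (i|i) (j|j) <;> simp [fromBlocks]

@[simp] lemma fr_fc_zero [Zero R] (B₁ : Matrix m₁ n₁ R) (B₂ : Matrix m₁ n₂ R) :
    fromRows (fromCols B₁ B₂) (0 : Matrix m₂ (n₁ ⊕ n₂) R) = fromBlocks B₁ B₂ 0 0 := by
  ext (i|i) (j|j) <;> simp [fromBlocks]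

@[simp] lemma fr_add [Add R] (A₁ B₁ : Matrix m₁ n₁ R) (A₂ B₂ : Matrix m₂ n₁ R) :
    fromRows A₁ A₂ + fromRows B₁ B₂ = fromRows (A₁ + B₁) (A₂ + B₂) := by
  ext (i|i) j <;> simp

@[simp] lemma fc_add [Add R] (A₁ B₁ : Matrix m₁ n₁ R) (A₂ B₂ : Matrix m₁ n₂ R) :
    fromCols A₁ A₂ + fromCols B₁ B₂ = fromCols (A₁ + B₁) (A₂ + B₂) := by
  ext i (j|j) <;> simp [fromCols]

@[simp] lemma fr_neg [Neg R] (A₁ : Matrix m₁ n₁ R) (A₂ : Matrix m₂ n₁ R) :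
    -fromRows A₁ A₂ = fromRows (-A₁) (-A₂) := by
  ext (i|i) j <;> simp

@[simp] lemma fc_neg [Neg R] (A₁ : Matrix m₁ n₁ R) (A₂ : Matrix m₁ n₂ R) :
    -fromCols A₁ A₂ = fromCols (-A₁) (-A₂) := by
  ext i (j|j) <;> simp [fromCols]

end helpers

variable {n₁ n₂ n₃ : ℕ}
theorem key_s6 (X : Matrix (Fin n₁) (Fin n₂) ℝ) (Y : Matrix (Fin n₂) (Fin n₁) ℝ)
    (Z : Matrix (Fin n₂) (Fin n₃) ℝ) (W : Matrix (Fin n₃) (Fin n₂) ℝ)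
    (hYX : Y * X = 1) (hWZ : W * Z = 1)
    (T : Matrix ((Fin n₁ ⊕ Fin n₂) ⊕ Fin n₃) ((Fin n₁ ⊕ Fin n₂) ⊕ Fin n₃) ℝ)
    (hT : T = fromBlocks (fromBlocks 1 X (-Y) 0) (fromRows 0 (-Z)) (fromCols 0 W) 0) :
    (T - 1) * (T ^ 2 - T + 1) * (T ^ 3 - T ^ 2 + 2 • T - 1) = 0 := by
  have hYX' : ∀ {m : Type} (M : Matrix (Fin n₂) m ℝ), Y * (X * M) = M := by
    intro m M; rw [← Matrix.mul_assoc, hYX, Matrix.one_mul]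
  have hWZ' : ∀ {m : Type} (M : Matrix (Fin n₃) m ℝ), W * (Z * M) = M := by
    intro m M; rw [← Matrix.mul_assoc, hWZ, Matrix.one_mul]
  rw [pow_two, pow_succ, pow_two, two_smul, hT]
  simp only [sub_eq_add_neg, Matrix.mul_add, Matrix.add_mul, Matrix.mul_neg, Matrix.neg_mul,
    Matrix.mul_one, Matrix.one_mul, neg_neg]
  simp [fromBlocks_multiply, fromBlocks_mul_fromRows, fromCols_mul_fromBlocks,
    fromRows_mul_fromCols, fromCols_mul_fromRows, fromBlocks_add,
    Matrix.mul_add, Matrix.add_mul, Matrix.mul_neg, Matrix.neg_mul, Matrix.mul_assoc,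
    hYX, hWZ, hYX', hWZ', fromBlocks_neg]
  ext ((i|i)|i) ((j|j)|j) <;>
    simp [fromBlocks, Matrix.add_apply, Matrix.neg_apply,
      Matrix.one_apply] <;> abel

theorem stmt_6 {n₁ n₂ n₃ : ℕ}
    (A₁ : Matrix (Fin n₁) (Fin n₁) ℝ)
    (B₁ C₁ : Matrix (Fin n₂) (Fin n₁) ℝ) (B₂ C₂ : Matrix (Fin n₃) (Fin n₂) ℝ)
    (hA₁ : IsUnit A₁)
    (S₂ : Matrix (Fin n₂) (Fin n₂) ℝ) (hS₂def : S₂ = C₁ * A₁⁻¹ * B₁ᵀ)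
    (hS₂ : IsUnit S₂)
    (S₃ : Matrix (Fin n₃) (Fin n₃) ℝ) (hS₃def : S₃ = C₂ * S₂⁻¹ * B₂ᵀ)
    (hS₃ : IsUnit S₃)
    (𝒜 : Matrix ((Fin n₁ ⊕ Fin n₂) ⊕ Fin n₃) ((Fin n₁ ⊕ Fin n₂) ⊕ Fin n₃) ℝ)
    (h𝒜 : 𝒜 = fromBlocks (fromBlocks A₁ B₁ᵀ C₁ 0) (fromRows 0 B₂ᵀ)
      (fromCols 0 C₂) 0)
    (T : Matrix ((Fin n₁ ⊕ Fin n₂) ⊕ Fin n₃) ((Fin n₁ ⊕ Fin n₂) ⊕ Fin n₃) ℝ)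
    (hT : T = (fromBlocks (fromBlocks A₁ 0 0 (-S₂)) 0 0 S₃)⁻¹ * 𝒜) :
    (T - 1) * (T ^ 2 - T + 1) * (T ^ 3 - T ^ 2 + 2 • T - 1) = 0 := by
  have hdA : IsUnit A₁.det := (isUnit_iff_isUnit_det A₁).mp hA₁
  have hdS₂ : IsUnit S₂.det := (isUnit_iff_isUnit_det S₂).mp hS₂
  have hdS₃ : IsUnit S₃.det := (isUnit_iff_isUnit_det S₃).mp hS₃
  have hYX : (S₂⁻¹ * C₁) * (A₁⁻¹ * B₁ᵀ) = 1 := by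
    have h : S₂⁻¹ * (C₁ * A₁⁻¹ * B₁ᵀ) = 1 := by
      rw [← hS₂def]; exact Matrix.nonsing_inv_mul S₂ hdS₂
    simpa [Matrix.mul_assoc] using h
  have hWZ : (S₃⁻¹ * C₂) * (S₂⁻¹ * B₂ᵀ) = 1 := by
    have h : S₃⁻¹ * (C₂ * S₂⁻¹ * B₂ᵀ) = 1 := by
      rw [← hS₃def]; exact Matrix.nonsing_inv_mul S₃ hdS₃
    simpa [Matrix.mul_assoc] using h
  set D : Matrix ((Fin n₁ ⊕ Fin n₂) ⊕ Fin n₃) ((Fin n₁ ⊕ Fin n₂) ⊕ Fin n₃) ℝ :=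
    fromBlocks (fromBlocks A₁ 0 0 (-S₂)) 0 0 S₃ with hD
  have hdD : IsUnit D.det := by
    rw [hD, det_fromBlocks_zero₂₁, det_fromBlocks_zero₂₁]
    exact (hdA.mul ((isUnit_iff_isUnit_det _).mp hS₂.neg)).mul hdS₃
  have hDT : D * fromBlocks (fromBlocks 1 (A₁⁻¹ * B₁ᵀ) (-(S₂⁻¹ * C₁)) 0)
      (fromRows 0 (-(S₂⁻¹ * B₂ᵀ))) (fromCols 0 (S₃⁻¹ * C₂)) 0 = 𝒜 := by
    rw [h𝒜, hD]
    simp [fromBlocks_multiply, fromBlocks_mul_fromRows, Matrix.mul_fromCols,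
      Matrix.mul_nonsing_inv_cancel_left _ _ hdA, Matrix.mul_nonsing_inv_cancel_left _ _ hdS₂,
      Matrix.mul_nonsing_inv_cancel_left _ _ hdS₃, Matrix.neg_mul, Matrix.mul_neg]
  have hT' : T = fromBlocks (fromBlocks 1 (A₁⁻¹ * B₁ᵀ) (-(S₂⁻¹ * C₁)) 0)
      (fromRows 0 (-(S₂⁻¹ * B₂ᵀ))) (fromCols 0 (S₃⁻¹ * C₂)) 0 := by
    rw [hT, ← hDT, Matrix.nonsing_inv_mul_cancel_left _ _ hdD]
  exact key_s6 _ _ _ _ hYX hWZ T hT'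
end
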